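/- Let L/K be a finite Galois field extension with group Γ, and let H be a group. For V a finite-dimensional L-linear representation of H, regarded as a K-linear representation by restriction, there is an isomorphism of L ⋊ (H × Γ)-modules L ⊗_K V ≅ (L ⋊ (H × Γ)) ⊗_{L[H]} V, where H × Γ acts on L through projection to Γ. -/

import Mathlib

open scoped TensorProduct

universe u


section Aux

variable (K L : Type*) [Field K] [Field L] [Algebra K L]
    [FiniteDimensional K L] [IsGalois K L]

open Module LinearMap Finset

/-- a basis of `L` over `K` -/
noncomputable def auxB : Basis (Fin (Module.finrank K L)) K L := Module.finBasis K L

/-- the trace-dual basis of `auxB` -/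
noncomputable def auxD : Basis (Fin (Module.finrank K L)) K L :=
  (Algebra.traceForm K L).dualBasis (traceForm_nondegenerate K L) (auxB K L)

lemma aux_key2 (x : L) :
    ∑ i, Algebra.trace K L (x * auxB K L i) • auxD K L i = x := by
  have h : ∀ i, Algebra.trace K L (x * auxB K L i) = (auxD K L).repr x i := by
    intro i
    rw [auxD, LinearMap.BilinForm.dualBasis_repr_apply]
    rfl
  calc ∑ i, Algebra.trace K L (x * auxB K L i) • auxD K L i
      = ∑ i, (auxD K L).repr x i • auxD K L i := by
        refine Finset.sum_congr rfl fun i _ => ?_; rw [h]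
    _ = x := (auxD K L).sum_repr x

lemma aux_key1 (x : L) :
    ∑ i, Algebra.trace K L (x * auxD K L i) • auxB K L i = x := by
  have h : ∀ i, Algebra.trace K L (x * auxD K L i) = (auxB K L).repr x i := by
    intro i
    have h2 := congrArg (fun y : L => Algebra.traceForm K L y (auxD K L i))
      ((auxB K L).sum_repr x)
    simp only [map_sum, LinearMap.sum_apply, map_smul, LinearMap.smul_apply] at h2
    have h3 : ∀ j, Algebra.traceForm K L (auxB K L j) (auxD K L i)
        = if j = i then 1 else 0 := fun j =>
      LinearMap.BilinForm.apply_dualBasis_right (traceForm_nondegenerate K L)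
        (Algebra.traceForm_isSymm (R := K) (S := L)) (auxB K L) j i
    rw [Finset.sum_congr rfl (fun j _ => by rw [h3 j])] at h2
    simp only [smul_ite, smul_eq_mul, mul_one, mul_zero, Finset.sum_ite_eq',
      Finset.mem_univ, if_true, mul_one, mul_zero] at h2
    rw [show Algebra.trace K L (x * auxD K L i) = Algebra.traceForm K L x (auxD K L i) from rfl,
      ← h2]
    simp [mul_ite]
  calc ∑ i, Algebra.trace K L (x * auxD K L i) • auxB K L i
      = ∑ i, (auxB K L).repr x i • auxB K L i := by
        refine Finset.sum_congr rfl fun i _ => ?_; rw [h]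
    _ = x := (auxB K L).sum_repr x

lemma aux_ht (c : L) :
    ∑ i, (c * auxB K L i) ⊗ₜ[K] auxD K L i
      = ∑ i, auxB K L i ⊗ₜ[K] (auxD K L i * c) := by
  calc ∑ i, (c * auxB K L i) ⊗ₜ[K] auxD K L i
      = ∑ i, (∑ j, Algebra.trace K L (c * auxB K L i * auxD K L j) • auxB K L j)
          ⊗ₜ[K] auxD K L i := by
        refine Finset.sum_congr rfl fun i _ => ?_
        rw [aux_key1 K L (c * auxB K L i)]
    _ = ∑ i, ∑ j, Algebra.trace K L (c * auxB K L i * auxD K L j)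
          • (auxB K L j ⊗ₜ[K] auxD K L i) := by
        simp [TensorProduct.sum_tmul, TensorProduct.smul_tmul']
    _ = ∑ i, ∑ j, Algebra.trace K L (c * auxB K L j * auxD K L i)
          • (auxB K L i ⊗ₜ[K] auxD K L j) := Finset.sum_comm
    _ = ∑ i, auxB K L i ⊗ₜ[K] (auxD K L i * c) := by
        refine Finset.sum_congr rfl fun i _ => ?_
        conv_rhs => rw [← aux_key2 K L (auxD K L i * c)]
        rw [TensorProduct.tmul_sum]
        refine Finset.sum_congr rfl fun j _ => ?_
        rw [TensorProduct.tmul_smul]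
        congr 2
        ring

lemma aux_e_smul (γ : L ≃ₐ[K] L) (c : L) :
    c * (∑ i, auxB K L i * γ (auxD K L i))
      = γ c * (∑ i, auxB K L i * γ (auxD K L i)) := by
  have h := congrArg ((LinearMap.mul' K L) ∘ₗ
    (TensorProduct.map LinearMap.id γ.toLinearMap)) (aux_ht K L c)
  simp only [map_sum, LinearMap.comp_apply, TensorProduct.map_tmul, LinearMap.mul'_apply,
    LinearMap.id_apply, map_mul, AlgEquiv.toLinearMap_apply] at h
  have h2 : ∀ i, c * (auxB K L i * γ (auxD K L i))
      = (c * auxB K L i) * γ (auxD K L i) := fun i => by ring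
  have h3 : ∀ i, γ c * (auxB K L i * γ (auxD K L i))
      = auxB K L i * (γ (auxD K L i) * γ c) := fun i => by ring
  rw [Finset.mul_sum, Finset.mul_sum, Finset.sum_congr rfl fun i _ => h2 i,
    Finset.sum_congr rfl fun i _ => h3 i, h]

lemma aux_e_ne (γ : L ≃ₐ[K] L) (hγ : γ ≠ 1) :
    ∑ i, auxB K L i * γ (auxD K L i) = 0 := by
  obtain ⟨c, hc⟩ : ∃ c : L, γ c ≠ c := by
    by_contra hall; push_neg at hall; exact hγ (AlgEquiv.ext hall)
  have h := aux_e_smul K L γ c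
  by_contra h0
  exact hc (mul_right_cancel₀ h0 h.symm)

lemma aux_e_sum : ∑ γ : L ≃ₐ[K] L, ∑ i, auxB K L i * γ (auxD K L i) = 1 := by
  rw [Finset.sum_comm]
  have h : ∀ i, ∑ γ : L ≃ₐ[K] L, auxB K L i * γ (auxD K L i)
      = Algebra.trace K L (auxD K L i) • auxB K L i := by
    intro i
    rw [← Finset.mul_sum, ← trace_eq_sum_automorphisms, Algebra.smul_def, mul_comm]
  rw [Finset.sum_congr rfl fun i _ => h i]
  simpa [one_mul] using aux_key1 K L 1

lemma aux_e_one : ∑ i, auxB K L i * auxD K L i = 1 := by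
  have h := Finset.sum_eq_single (s := Finset.univ) (1 : L ≃ₐ[K] L)
    (f := fun γ => ∑ i, auxB K L i * γ (auxD K L i))
    (fun γ _ hne => aux_e_ne K L γ hne) (by simp)
  calc ∑ i, auxB K L i * auxD K L i
      = ∑ i, auxB K L i * (1 : L ≃ₐ[K] L) (auxD K L i) := by
        refine Finset.sum_congr rfl fun i _ => ?_; rw [AlgEquiv.one_apply]
    _ = ∑ γ : L ≃ₐ[K] L, ∑ i, auxB K L i * γ (auxD K L i) := h.symm
    _ = 1 := aux_e_sum K L

end Aux

set_option maxHeartbeats 2000000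


/-- Let `L/K` be a finite Galois field extension with group `Γ`, and
`H` a group; let `H × Γ` act on `L` through the projection to `Γ`.  For `V` a
finite-dimensional `L`-linear representation of `H`, there is an isomorphism of
`L ⋊ (H × Γ)`-modules `L ⊗_K V ≅ (L ⋊ (H × Γ)) ⊗_{L[H]} V`, where the induced module
is characterized by its universal property: `(T, β)` with `β : V → T` an `L[H]`-linear
map universal among `L[H]`-linear maps to semilinear representations of `H × Γ`.  On
`L ⊗_K V` the semilinear action is `(h, γ) · (λ ⊗ v) = γ(λ) ⊗ h(v)` and `L` acts on the
left factor. -/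
theorem stmt6 {K L : Type*} [Field K] [Field L] [Algebra K L]
    [FiniteDimensional K L] [IsGalois K L]
    {H : Type*} [Group H]
    (V : Type u) [AddCommGroup V] [Module K V] [Module L V] [IsScalarTower K L V]
    [FiniteDimensional L V]
    (ρV : H →* (V ≃ₗ[L] V))
    -- `(T, ρT, β)`: a semilinear representation of `H × Γ` over `L` together with an
    -- `L[H]`-linear map `β : V → T`
    (T : Type u) [AddCommGroup T] [Module K T] [Module L T] [IsScalarTower K L T]
    (ρT : (H × (L ≃ₐ[K] L)) →* (T ≃ₗ[K] T))
    (hρT : ∀ (p : H × (L ≃ₐ[K] L)) (c : L) (t : T), ρT p (c • t) = p.2 c • ρT p t)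
    (β : V →ₗ[L] T) (hβ : ∀ (h : H) (v : V), β (ρV h v) = ρT (h, 1) (β v))
    -- universal property of the induced module `(L ⋊ (H × Γ)) ⊗_{L[H]} V`
    (huniv : ∀ (U : Type u) [AddCommGroup U] [Module K U] [Module L U]
      [IsScalarTower K L U] (ρU : (H × (L ≃ₐ[K] L)) →* (U ≃ₗ[K] U)),
      (∀ (p : H × (L ≃ₐ[K] L)) (c : L) (x : U), ρU p (c • x) = p.2 c • ρU p x) →
      ∀ f : V →ₗ[L] U, (∀ (h : H) (v : V), f (ρV h v) = ρU (h, 1) (f v)) →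
      ∃! F : T →ₗ[L] U,
        (∀ (p : H × (L ≃ₐ[K] L)) (t : T), F (ρT p t) = ρU p (F t)) ∧
        ∀ v : V, F (β v) = f v) :
    -- conclusion: `T ≅ L ⊗_K V` equivariantly and `L`-linearly
    ∃ e : T ≃ₗ[L] (L ⊗[K] V),
      ∀ (h : H) (γ : L ≃ₐ[K] L) (t : T),
        e (ρT (h, γ) t)
          = TensorProduct.map γ.toLinearMap
              ((ρV h).toLinearMap.restrictScalars K) (e t) := by
  classical
  set b := auxB K L with hb
  set d := auxD K L with hd
  -- composition rule for ρT
  have hcomp : ∀ (a c : H × (L ≃ₐ[K] L)) (t : T), ρT a (ρT c t) = ρT (a * c) t := by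
    intro a c t; rw [map_mul]; rfl
  -- the candidate map f : V →ₗ[L] L ⊗[K] V
  let f0 : V →ₗ[K] L ⊗[K] V :=
    ∑ i, (TensorProduct.mk K L V (b i)).comp
      (((LinearMap.lsmul L V) (d i)).restrictScalars K)
  have hf0 : ∀ v : V, f0 v = ∑ i, b i ⊗ₜ[K] (d i • v) := by
    intro v
    simp [f0, LinearMap.sum_apply]
  have hf0smul : ∀ (c : L) (v : V), f0 (c • v) = c • f0 v := by
    intro c v
    have h := congrArg (TensorProduct.map (LinearMap.id (R := K) (M := L))
      ((LinearMap.toSpanSingleton L V v).restrictScalars K)) (aux_ht K L c)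
    simp only [map_sum, TensorProduct.map_tmul, LinearMap.id_apply,
      LinearMap.coe_restrictScalars, LinearMap.toSpanSingleton_apply, ← hb, ← hd] at h
    rw [hf0, hf0, Finset.smul_sum]
    calc ∑ i, b i ⊗ₜ[K] (d i • c • v)
        = ∑ i, b i ⊗ₜ[K] ((d i * c) • v) := by
          refine Finset.sum_congr rfl fun i _ => ?_; rw [smul_smul]
      _ = ∑ i, (c * b i) ⊗ₜ[K] (d i • v) := h.symm
      _ = ∑ i, c • (b i ⊗ₜ[K] (d i • v)) := by
          refine Finset.sum_congr rfl fun i _ => ?_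
          rw [TensorProduct.smul_tmul', smul_eq_mul]
  let f : V →ₗ[L] L ⊗[K] V :=
    { toFun := f0, map_add' := fun x y => map_add f0 x y, map_smul' := hf0smul }
  -- the semilinear action on L ⊗[K] V
  let ρU : (H × (L ≃ₐ[K] L)) →* ((L ⊗[K] V) ≃ₗ[K] L ⊗[K] V) :=
  { toFun := fun p => TensorProduct.congr p.2.toLinearEquiv ((ρV p.1).restrictScalars K)
    map_one' := by
      refine LinearEquiv.toLinearMap_injective (TensorProduct.ext' fun x y => ?_)
      simp
    map_mul' := fun p q => by
      refine LinearEquiv.toLinearMap_injective (TensorProduct.ext' fun x y => ?_)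
      simp }
  have hρUtm : ∀ (p : H × (L ≃ₐ[K] L)) (c : L) (v : V),
      ρU p (c ⊗ₜ[K] v) = p.2 c ⊗ₜ[K] (ρV p.1 v) := by
    intro p c v
    simp [ρU, TensorProduct.congr_tmul]
  have hρU : ∀ (p : H × (L ≃ₐ[K] L)) (c : L) (x : L ⊗[K] V),
      ρU p (c • x) = p.2 c • ρU p x := by
    intro p c x
    induction x using TensorProduct.induction_on with
    | zero => simp
    | tmul a y =>
      rw [TensorProduct.smul_tmul', hρUtm, hρUtm, TensorProduct.smul_tmul',
        smul_eq_mul, smul_eq_mul, map_mul]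
    | add x1 x2 h1 h2 => rw [smul_add, map_add, h1, h2, map_add, smul_add]
  have hfeq : ∀ (h : H) (v : V), f (ρV h v) = ρU (h, 1) (f v) := by
    intro h v
    show f0 (ρV h v) = ρU (h, 1) (f0 v)
    rw [hf0, hf0, map_sum]
    refine Finset.sum_congr rfl fun i _ => ?_
    rw [hρUtm, AlgEquiv.one_apply, map_smul]
  -- transfer to a `Type u` copy of `L ⊗[K] V`
  haveI : Module.Finite K V := Module.Finite.trans L V
  have hrank : Module.finrank L (Fin (Module.finrank K L) → V)
      = Module.finrank L (L ⊗[K] V) := by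
    rw [Module.finrank_baseChange, Module.finrank_pi_fintype,
      Finset.sum_const, Finset.card_univ, Fintype.card_fin, smul_eq_mul,
      ← Module.finrank_mul_finrank K L V]
  let ε : (Fin (Module.finrank K L) → V) ≃ₗ[L] L ⊗[K] V :=
    LinearEquiv.ofFinrankEq _ _ hrank
  let εK : (Fin (Module.finrank K L) → V) ≃ₗ[K] L ⊗[K] V := ε.restrictScalars K
  let ρU' : (H × (L ≃ₐ[K] L)) →* ((Fin (Module.finrank K L) → V) ≃ₗ[K]
      (Fin (Module.finrank K L) → V)) :=
  { toFun := fun p => (εK.trans (ρU p)).trans εK.symm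
    map_one' := by
      apply LinearEquiv.toLinearMap_injective
      ext x
      simp [map_one]
    map_mul' := fun p q => by
      apply LinearEquiv.toLinearMap_injective
      ext x
      simp [map_mul] }
  have hρU' : ∀ (p : H × (L ≃ₐ[K] L)) (c : L) (x : Fin (Module.finrank K L) → V),
      ρU' p (c • x) = p.2 c • ρU' p x := by
    intro p c x
    show εK.symm ((ρU p) (εK (c • x))) = p.2 c • εK.symm ((ρU p) (εK x))
    have h1 : εK (c • x) = c • εK x := ε.map_smul c x
    have h2 : ∀ y : L ⊗[K] V, εK.symm (p.2 c • y) = p.2 c • εK.symm y := fun y =>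
      ε.symm.map_smul _ _
    rw [h1, hρU, h2]
  obtain ⟨F', ⟨hF'eq, hF'β⟩, -⟩ := huniv (Fin (Module.finrank K L) → V) ρU' hρU'
    (ε.symm.toLinearMap.comp f) (by
      intro h v
      show ε.symm (f (ρV h v)) = εK.symm ((ρU (h, 1)) (εK (ε.symm (f v))))
      have h3 : εK (ε.symm (f v)) = f v := ε.apply_symm_apply _
      rw [h3, hfeq]
      rfl)
  let F : T →ₗ[L] L ⊗[K] V := ε.toLinearMap.comp F'
  have hFeq : ∀ (p : H × (L ≃ₐ[K] L)) (t : T), F (ρT p t) = ρU p (F t) := by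
    intro p t
    show ε (F' (ρT p t)) = ρU p (ε (F' t))
    rw [hF'eq]
    show ε (εK.symm ((ρU p) (εK (F' t)))) = _
    have h3 : ∀ y : L ⊗[K] V, ε (εK.symm y) = y := fun y => εK.apply_symm_apply y
    rw [h3]
    rfl
  have hFβ : ∀ v : V, F (β v) = f v := by
    intro v
    show ε (F' (β v)) = f v
    rw [hF'β]
    exact ε.apply_symm_apply _
  -- the inverse map G
  let ψ : V →ₗ[K] T :=
    ∑ γ : L ≃ₐ[K] L, (ρT (1, γ)).toLinearMap.comp (β.restrictScalars K)
  have hψ : ∀ v : V, ψ v = ∑ γ : L ≃ₐ[K] L, ρT (1, γ) (β v) := by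
    intro v
    simp [ψ, LinearMap.sum_apply]
  let G : L ⊗[K] V →ₗ[L] T :=
    TensorProduct.AlgebraTensorModule.lift (LinearMap.toSpanSingleton L (V →ₗ[K] T) ψ)
  have hG : ∀ (c : L) (v : V), G (c ⊗ₜ[K] v) = c • ψ v := by
    intro c v
    simp [G, TensorProduct.AlgebraTensorModule.lift_tmul]
  have hGeq : ∀ (p : H × (L ≃ₐ[K] L)) (x : L ⊗[K] V), G (ρU p x) = ρT p (G x) := by
    intro p x
    induction x using TensorProduct.induction_on with
    | zero => simp
    | add x1 x2 h1 h2 => simp only [map_add, h1, h2]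
    | tmul c v =>
      rw [hρUtm, hG, hG, hψ, hψ, Finset.smul_sum, hρT, map_sum, Finset.smul_sum]
      have hL : ∀ γ : L ≃ₐ[K] L, p.2 c • ρT (1, γ) (β (ρV p.1 v))
          = p.2 c • ρT (p.1, γ) (β v) := by
        intro γ
        rw [hβ, hcomp, show ((1, γ) * (p.1, 1) : H × (L ≃ₐ[K] L)) = (p.1, γ) by
          rw [Prod.mk_mul_mk, one_mul, mul_one]]
      have hR : ∀ γ : L ≃ₐ[K] L, p.2 c • ρT p (ρT (1, γ) (β v))
          = p.2 c • ρT (p.1, p.2 * γ) (β v) := by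
        intro γ
        rw [hcomp, show (p * (1, γ) : H × (L ≃ₐ[K] L)) = (p.1, p.2 * γ) by
          apply Prod.ext <;> simp]
      rw [Finset.sum_congr rfl fun γ _ => hL γ, Finset.sum_congr rfl fun γ _ => hR γ]
      exact (Fintype.sum_equiv (Equiv.mulLeft p.2)
        (fun γ => p.2 c • ρT (p.1, p.2 * γ) (β v))
        (fun γ => p.2 c • ρT (p.1, γ) (β v)) (fun γ => rfl)).symm
  -- G ∘ F fixes the image of β
  have hGfβ : ∀ v : V, G (f v) = β v := by
    intro v
    show G (f0 v) = β v
    rw [hf0, map_sum]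
    have h1 : ∀ i, G (b i ⊗ₜ[K] (d i • v))
        = ∑ γ : L ≃ₐ[K] L, (b i * γ (d i)) • ρT (1, γ) (β v) := by
      intro i
      rw [hG, hψ, Finset.smul_sum]
      refine Finset.sum_congr rfl fun γ _ => ?_
      rw [map_smul β, show ρT (1, γ) (d i • β v) = γ (d i) • ρT (1, γ) (β v) from
        hρT (1, γ) (d i) (β v), smul_smul]
    rw [Finset.sum_congr rfl fun i _ => h1 i, Finset.sum_comm]
    rw [Finset.sum_congr rfl fun (γ : L ≃ₐ[K] L) _ =>
      (Finset.sum_smul (s := Finset.univ) (x := ρT (1, γ) (β v))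
        (f := fun i => b i * γ (d i))).symm]
    have hsingle : (∑ γ : L ≃ₐ[K] L, (∑ i, b i * γ (d i)) • ρT (1, γ) (β v))
        = (∑ i, b i * (1 : L ≃ₐ[K] L) (d i)) • ρT (1, 1) (β v) :=
      Finset.sum_eq_single 1
        (fun γ _ hγ => by rw [hb, hd, aux_e_ne K L γ hγ, zero_smul]) (by simp)
    rw [hsingle]
    have he : ∑ i, b i * (1 : L ≃ₐ[K] L) (d i) = 1 := by
      rw [Finset.sum_congr rfl fun i _ => by rw [AlgEquiv.one_apply], hb, hd]
      exact aux_e_one K L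
    rw [he, one_smul, show ((1 : H), (1 : L ≃ₐ[K] L)) = (1 : H × (L ≃ₐ[K] L)) from rfl,
      map_one]
    rfl
  -- F ∘ G = id
  have hkey : ∀ v : V, ∑ γ : L ≃ₐ[K] L, ρU (1, γ) (f v) = (1 : L) ⊗ₜ[K] v := by
    intro v
    have h1 : ∀ γ : L ≃ₐ[K] L, ρU (1, γ) (f v) = ∑ i, γ (b i) ⊗ₜ[K] (d i • v) := by
      intro γ
      show ρU (1, γ) (f0 v) = _
      rw [hf0, map_sum]
      refine Finset.sum_congr rfl fun i _ => ?_
      rw [hρUtm]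
      congr 1
      show (ρV 1) (d i • v) = d i • v
      rw [map_one]
      rfl
    rw [Finset.sum_congr rfl fun γ _ => h1 γ, Finset.sum_comm]
    have h2 : ∀ i, ∑ γ : L ≃ₐ[K] L, γ (b i) ⊗ₜ[K] (d i • v)
        = (1 : L) ⊗ₜ[K] ((Algebra.trace K L (b i) • d i) • v) := by
      intro i
      rw [← TensorProduct.sum_tmul, ← trace_eq_sum_automorphisms,
        Algebra.algebraMap_eq_smul_one, TensorProduct.smul_tmul, smul_assoc]
    rw [Finset.sum_congr rfl fun i _ => h2 i, ← TensorProduct.tmul_sum,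
      ← Finset.sum_smul]
    have h3 : ∑ i, Algebra.trace K L (b i) • d i = 1 := by
      have h4 := aux_key2 K L 1
      rw [Finset.sum_congr rfl fun i _ => by rw [one_mul]] at h4
      rw [hb, hd]
      exact h4
    rw [h3, one_smul]
  have hFG : ∀ x : L ⊗[K] V, F (G x) = x := by
    intro x
    induction x using TensorProduct.induction_on with
    | zero => simp
    | add x1 x2 h1 h2 => simp only [map_add, h1, h2]
    | tmul c v =>
      rw [hG, map_smul, hψ, map_sum,
        Finset.sum_congr rfl fun (γ : L ≃ₐ[K] L) _ => by rw [hFeq (1, γ) (β v), hFβ],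
        hkey, TensorProduct.smul_tmul', smul_eq_mul, mul_one]
  -- G ∘ F = id, by uniqueness
  obtain ⟨F0, -, hF0uniq⟩ := huniv T ρT hρT β hβ
  have hGF : ∀ t : T, G (F t) = t := by
    have ha : G.comp F = F0 := hF0uniq (G.comp F)
      ⟨fun p t => by simp only [LinearMap.comp_apply, hFeq, hGeq],
       fun v => by simp only [LinearMap.comp_apply]; rw [hFβ]; exact hGfβ v⟩
    have hb' : LinearMap.id (R := L) (M := T) = F0 := hF0uniq LinearMap.id
      ⟨fun p t => rfl, fun v => rfl⟩
    intro t
    have h5 := congrArg (fun (Φ : T →ₗ[L] T) => Φ t) (ha.trans hb'.symm)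
    simpa using h5
  refine ⟨LinearEquiv.ofLinear F G (LinearMap.ext hFG) (LinearMap.ext hGF),
    fun h γ t => ?_⟩
  show F (ρT (h, γ) t) = TensorProduct.map γ.toLinearMap
    ((ρV h).toLinearMap.restrictScalars K) (F t)
  rw [hFeq (h, γ) t]
  rfl
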